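/- If P ∈ sl(3,ℂ) is a nonzero element such that the kernel of ad(P) restricted to the orthogonal complement P^⊥ (with respect to the trace form ⟨X,Y⟩ = tr(XY)) has dimension at least 4, then P is conjugate to the nilpotent matrix E₁₂ (the matrix with 1 in entry (1,2) and zeros elsewhere). -/

import Mathlib

set_option synthInstance.maxHeartbeats 1000000
set_option maxHeartbeats 1000000

open Matrix Module

private lemma matrix_eq_zero_of_mulVec {X : Matrix (Fin 3) (Fin 3) ℂ}
    (h : ∀ v, X.mulVec v = 0) : X = 0 := by
  ext i j
  have := congrFun (h (Pi.single j 1)) i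
  simpa using this

private lemma exists_indep_pair {P : Matrix (Fin 3) (Fin 3) ℂ}
    (htr : Matrix.trace P = 0) (hP0 : P ≠ 0) :
    ∃ v : Fin 3 → ℂ, LinearIndependent ℂ ![P.mulVec v, v] := by
  by_contra hcon
  push_neg at hcon
  have key : ∀ v : Fin 3 → ℂ, ∃ t : ℂ, t • v = P.mulVec v := by
    intro v
    rcases eq_or_ne v 0 with rfl | hv
    · exact ⟨0, by simp⟩
    · have h := hcon v
      rw [linearIndependent_fin2] at h
      push_neg at h
      simpa using h (by simpa using hv)
  choose a ha using key
  set e : Fin 3 → (Fin 3 → ℂ) := fun j => Pi.single j 1 with he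
  have hcol : ∀ j i, P i j = a (e j) * (if i = j then 1 else 0) := by
    intro j i
    have := congrFun (ha (e j)) i
    simp only [he, Matrix.mulVec_single, mul_one, MulOpposite.op_one, one_smul] at this
    change _ = P i j at this
    rw [← this]
    simp [Pi.single_apply, eq_comm, he]
  have haeq : ∀ j k : Fin 3, a (e j) = a (e k) := by
    intro j k
    rcases eq_or_ne j k with rfl | hjk
    · rfl
    · have h1 := congrFun (ha (e j + e k)) j
      have h2 := congrFun (ha (e j + e k)) k
      have hmv : P.mulVec (e j + e k) = a (e j) • e j + a (e k) • e k := by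
        rw [Matrix.mulVec_add, ← ha (e j), ← ha (e k)]
      have h1' := congrFun hmv j
      have h2' := congrFun hmv k
      have hPj := ha (e j + e k)
      have e1j : (e j) j = 1 := by simp [he]
      have e1k : (e k) k = 1 := by simp [he]
      have ejk : (e j) k = 0 := by simp [he, Pi.single_apply, hjk.symm]
      have ekj : (e k) j = 0 := by simp [he, Pi.single_apply, hjk]
      have hj : a (e j + e k) = a (e j) := by
        have := congrFun hPj j
        rw [h1'] at this
        simpa [e1j, ejk, ekj] using this
      have hk : a (e j + e k) = a (e k) := by
        have := congrFun hPj k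
        rw [h2'] at this
        simpa [e1k, ejk, ekj] using this
      rw [← hj, hk]
  have hPdiag : P = a (e 0) • (1 : Matrix (Fin 3) (Fin 3) ℂ) := by
    ext i j
    rw [hcol j i, haeq j 0]
    simp [Matrix.one_apply, eq_comm]
  have : Matrix.trace P = 3 * a (e 0) := by
    rw [hPdiag]
    simp [Matrix.trace_smul, Matrix.trace_one]
    ring
  rw [htr] at this
  have ha0 : a (e 0) = 0 := by
    have h3 : (3:ℂ) ≠ 0 := by norm_num
    field_simp at this
    simpa using this.symm
  rw [ha0, zero_smul] at hPdiag
  exact hP0 hPdiag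

/-- If `P ∈ sl(3,ℂ)` is nonzero and the kernel of `ad(P)` restricted to the
trace-form orthogonal complement `P^⊥` has dimension at least 4, then `P` is
conjugate to the elementary nilpotent matrix `E₁₂`. -/
theorem adP_large_kernel_implies_conjugate_to_E12
    (P : Matrix (Fin 3) (Fin 3) ℂ) (hP0 : P ≠ 0) (htr : Matrix.trace P = 0)
    (hker : 4 ≤ Module.finrank ℂ
      (LinearMap.ker (Matrix.traceLinearMap (Fin 3) ℂ ℂ) ⊓
       LinearMap.ker ((Matrix.traceLinearMap (Fin 3) ℂ ℂ).comp (LinearMap.mulLeft ℂ P)) ⊓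
       LinearMap.ker (LinearMap.mulLeft ℂ P - LinearMap.mulRight ℂ P) :
        Submodule ℂ (Matrix (Fin 3) (Fin 3) ℂ))) :
    ∃ g : Matrix.SpecialLinearGroup (Fin 3) ℂ,
      (↑g : Matrix (Fin 3) (Fin 3) ℂ) * P * (↑g⁻¹ : Matrix (Fin 3) (Fin 3) ℂ) =
        Matrix.single 0 1 1 := by
  classical
  -- ### Setup: the centralizer `C` and the subspace `W`
  set W : Submodule ℂ (Matrix (Fin 3) (Fin 3) ℂ) :=
      (LinearMap.ker (Matrix.traceLinearMap (Fin 3) ℂ ℂ) ⊓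
       LinearMap.ker ((Matrix.traceLinearMap (Fin 3) ℂ ℂ).comp (LinearMap.mulLeft ℂ P)) ⊓
       LinearMap.ker (LinearMap.mulLeft ℂ P - LinearMap.mulRight ℂ P)) with hW
  set C : Submodule ℂ (Matrix (Fin 3) (Fin 3) ℂ) :=
      LinearMap.ker (LinearMap.mulLeft ℂ P - LinearMap.mulRight ℂ P) with hC
  have hmemC : ∀ X : Matrix (Fin 3) (Fin 3) ℂ, X ∈ C ↔ P * X = X * P := by
    intro X
    simp [hC, LinearMap.mem_ker, LinearMap.sub_apply, sub_eq_zero]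
  have hmemW : ∀ X, X ∈ W → Matrix.trace X = 0 ∧ Matrix.trace (P * X) = 0 ∧ P * X = X * P := by
    intro X hX
    obtain ⟨⟨h1, h2⟩, h3⟩ := hX
    refine ⟨h1, h2, ?_⟩
    simpa [sub_eq_zero] using h3
  have hWC : W ≤ C := inf_le_right
  have h1C : (1 : Matrix (Fin 3) (Fin 3) ℂ) ∈ C := by rw [hmemC]; simp
  have h1W : (1 : Matrix (Fin 3) (Fin 3) ℂ) ∉ W := by
    intro h
    have := (hmemW _ h).1
    rw [Matrix.trace_one] at this
    norm_num at this
  have hC5 : 5 ≤ finrank ℂ C := by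
    have hlt : W < C := lt_of_le_of_ne hWC (fun he => h1W (he ▸ h1C))
    have := Submodule.finrank_lt_finrank_of_lt hlt
    omega
  -- ### A vector `v` with `v, Pv` independent, extended to a basis `Pv, v, w`
  obtain ⟨v, hv⟩ := exists_indep_pair htr hP0
  set S : Submodule ℂ (Fin 3 → ℂ) := Submodule.span ℂ {P.mulVec v, v} with hS
  have hSle : finrank ℂ S ≤ 2 := by
    have hle : S ≤ LinearMap.range ((LinearMap.id.smulRight (P.mulVec v)).coprod
        (LinearMap.id.smulRight v) : (ℂ × ℂ) →ₗ[ℂ] (Fin 3 → ℂ)) := by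
      rw [hS, Submodule.span_le]
      rintro x (rfl | rfl)
      · exact ⟨(1, 0), by simp⟩
      · exact ⟨(0, 1), by simp⟩
    calc finrank ℂ S ≤ finrank ℂ (LinearMap.range _) := Submodule.finrank_mono hle
      _ ≤ finrank ℂ (ℂ × ℂ) := LinearMap.finrank_range_le _
      _ = 2 := by simp
  have hSne : ∃ w, w ∉ S := by
    by_contra h
    push_neg at h
    have : S = ⊤ := Submodule.eq_top_iff'.2 h
    rw [this, finrank_top, Module.finrank_fin_fun] at hSle
    omega
  obtain ⟨w, hw⟩ := hSne
  have hindep : LinearIndependent ℂ ![P.mulVec v, v, w] := by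
    rw [Fintype.linearIndependent_iff]
    intro g hg
    rw [Fin.sum_univ_three] at hg
    simp only [Matrix.cons_val_zero, Matrix.cons_val_one, Matrix.head_cons,
      Matrix.cons_val_two, Matrix.tail_cons] at hg
    have hg2 : g 2 = 0 := by
      by_contra hg2
      apply hw
      have hww : w = (g 2)⁻¹ • (g 2 • w) := by
        rw [smul_smul, inv_mul_cancel₀ hg2, one_smul]
      rw [hww, eq_neg_of_add_eq_zero_right hg, hS]
      exact Submodule.smul_mem _ _ (Submodule.neg_mem _ (Submodule.add_mem _
        (Submodule.smul_mem _ _ (Submodule.subset_span (Or.inl rfl)))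
        (Submodule.smul_mem _ _ (Submodule.subset_span (Or.inr rfl)))))
    rw [hg2, zero_smul, add_zero] at hg
    have hpair := Fintype.linearIndependent_iff.1 hv ![g 0, g 1] (by
      rw [Fin.sum_univ_two]
      simpa using hg)
    intro i
    fin_cases i
    · simpa using hpair 0
    · simpa using hpair 1
    · exact hg2
  have card_eq : Fintype.card (Fin 3) = finrank ℂ (Fin 3 → ℂ) := by
    simp [Module.finrank_fin_fun]
  let b3 : Basis (Fin 3) ℂ (Fin 3 → ℂ) := basisOfLinearIndependentOfCardEqFinrank hindep card_eq
  have hb3 : ⇑b3 = ![P.mulVec v, v, w] := coe_basisOfLinearIndependentOfCardEqFinrank _ _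
  set c : ℂ := b3.repr (P.mulVec w) 2 with hc
  have hPw : P.mulVec w = b3.repr (P.mulVec w) 0 • P.mulVec v + b3.repr (P.mulVec w) 1 • v
      + c • w := by
    conv_lhs => rw [← b3.sum_repr (P.mulVec w)]
    rw [Fin.sum_univ_three, hb3, hc]
    simp
  -- ### The matrix `Q = P - c•1` and dimension bounds
  have hQ0 : P - c • 1 ≠ 0 := by
    intro h
    rw [sub_eq_zero] at h
    have : Matrix.trace P = c * 3 := by
      rw [h, Matrix.trace_smul, Matrix.trace_one]
      simp
    rw [htr] at this
    have hc0 : c = 0 := by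
      field_simp at this
      simpa using this
    rw [hc0, zero_smul] at h
    exact hP0 h
  set Q : Matrix (Fin 3) (Fin 3) ℂ := P - c • 1 with hQ
  have hcommv : ∀ X ∈ C, ∀ y, X.mulVec (P.mulVec y) = P.mulVec (X.mulVec y) := by
    intro X hX y
    rw [Matrix.mulVec_mulVec, Matrix.mulVec_mulVec, (hmemC X).1 hX]
  set ψ : C →ₗ[ℂ] (Fin 3 → ℂ) :=
    { toFun := fun X => Matrix.mulVec (X : Matrix (Fin 3) (Fin 3) ℂ) v
      map_add' := by intros; simp [Matrix.add_mulVec]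
      map_smul' := by intros; simp [Matrix.smul_mulVec] } with hψ
  have hrnψ : finrank ℂ (LinearMap.range ψ) + finrank ℂ (LinearMap.ker ψ) = finrank ℂ C :=
    LinearMap.finrank_range_add_finrank_ker ψ
  have hrange3 : finrank ℂ (LinearMap.range ψ) ≤ 3 := by
    have := (LinearMap.range ψ).finrank_le
    rwa [Module.finrank_fin_fun] at this
  have hkψ2 : 2 ≤ finrank ℂ (LinearMap.ker ψ) := by omega
  set E : Submodule ℂ (Fin 3 → ℂ) := LinearMap.ker (Matrix.mulVecLin Q) with hE
  have hmemE : ∀ y, y ∈ E ↔ P.mulVec y = c • y := by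
    intro y
    rw [hE, LinearMap.mem_ker, Matrix.mulVecLin_apply, hQ, Matrix.sub_mulVec, sub_eq_zero,
      Matrix.smul_mulVec, Matrix.one_mulVec]
  have hφmem : ∀ X : LinearMap.ker ψ, Matrix.mulVec ((X : C) : Matrix (Fin 3) (Fin 3) ℂ) w ∈ E := by
    rintro ⟨⟨X, hXC⟩, hXk⟩
    have hXv : X.mulVec v = 0 := hXk
    have hXPv : X.mulVec (P.mulVec v) = 0 := by rw [hcommv X hXC, hXv, Matrix.mulVec_zero]
    rw [hmemE]
    have := hcommv X hXC w
    rw [hPw] at this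
    simp only [Matrix.mulVec_add, Matrix.mulVec_smul, hXv, hXPv, smul_zero, zero_add,
      add_zero] at this
    exact this.symm
  set φ : (LinearMap.ker ψ) →ₗ[ℂ] E :=
    { toFun := fun X => ⟨Matrix.mulVec ((X : C) : Matrix (Fin 3) (Fin 3) ℂ) w, hφmem X⟩
      map_add' := by intros; ext; simp [Matrix.add_mulVec]
      map_smul' := by intros; ext; simp [Matrix.smul_mulVec] } with hφ
  have hφker : ∀ X, φ X = 0 → X = 0 := by
    rintro ⟨⟨X, hXC⟩, hXk⟩ hzero
    have hXv : X.mulVec v = 0 := hXk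
    have hXPv : X.mulVec (P.mulVec v) = 0 := by rw [hcommv X hXC, hXv, Matrix.mulVec_zero]
    have hXw : X.mulVec w = 0 := by
      have := congrArg (fun (z : E) => (z : Fin 3 → ℂ)) hzero
      simpa [hφ] using this
    have hX0 : X = 0 := by
      apply matrix_eq_zero_of_mulVec
      intro y
      have hy := b3.sum_repr y
      rw [Fin.sum_univ_three, hb3] at hy
      simp only [Matrix.cons_val_zero, Matrix.cons_val_one, Matrix.head_cons,
        Matrix.cons_val_two, Matrix.tail_cons] at hy
      rw [← hy]
      simp [Matrix.mulVec_add, Matrix.mulVec_smul, hXv, hXPv, hXw]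
    exact Subtype.ext (Subtype.ext (by simpa using hX0))
  have hφinj : Function.Injective φ :=
    by
      intro x y hxy
      exact sub_eq_zero.mp (hφker (x - y) (by have h := map_sub φ x y; rw [hxy, sub_self] at h; exact h))
  have hkE : finrank ℂ (LinearMap.ker ψ) ≤ finrank ℂ E :=
    LinearMap.finrank_le_finrank_of_injective hφinj
  have hrnQ : finrank ℂ (LinearMap.range (Matrix.mulVecLin Q)) + finrank ℂ E = 3 := by
    have := LinearMap.finrank_range_add_finrank_ker (Matrix.mulVecLin Q)
    rwa [Module.finrank_fin_fun] at this
  have hRpos : finrank ℂ (LinearMap.range (Matrix.mulVecLin Q)) ≠ 0 := by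
    intro h
    rw [Submodule.finrank_eq_zero, LinearMap.range_eq_bot] at h
    apply hQ0
    apply matrix_eq_zero_of_mulVec
    intro y
    have := LinearMap.congr_fun h y
    simpa [Matrix.mulVecLin_apply] using this
  have hE2 : finrank ℂ E = 2 := by omega
  have hCle5 : finrank ℂ C ≤ 5 := by omega
  -- ### `trace (P * P) = 0`
  have htrP2 : Matrix.trace (P * P) = 0 := by
    by_contra hne
    have hPC : P ∈ C := (hmemC P).2 rfl
    have hPW : P ∉ W := fun h => hne ((hmemW P h).2.1)
    set W' : Submodule ℂ (Matrix (Fin 3) (Fin 3) ℂ) := W ⊔ (ℂ ∙ P) with hW'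
    have hPW' : P ∈ W' := Submodule.mem_sup_right (Submodule.mem_span_singleton_self P)
    have hWW' : W < W' := lt_of_le_of_ne le_sup_left (fun he => hPW (he ▸ hPW'))
    have hW'C : W' ≤ C := sup_le hWC ((Submodule.span_singleton_le_iff_mem _ _).2 hPC)
    have h1W' : (1 : Matrix (Fin 3) (Fin 3) ℂ) ∉ W' := by
      intro h
      rw [hW', Submodule.mem_sup] at h
      obtain ⟨X, hX, Y, hY, hXY⟩ := h
      obtain ⟨t, rfl⟩ := Submodule.mem_span_singleton.1 hY
      have h1 := congrArg Matrix.trace hXY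
      rw [Matrix.trace_add, Matrix.trace_smul, (hmemW X hX).1, htr, Matrix.trace_one] at h1
      simp at h1
    have hW'C' : W' < C := lt_of_le_of_ne hW'C (fun he => h1W' (he ▸ h1C))
    have f1 := Submodule.finrank_lt_finrank_of_lt hWW'
    have f2 := Submodule.finrank_lt_finrank_of_lt hW'C'
    omega
  -- ### the generator `u` of the range of `Q`, and `P * P = 0`
  have hR1 : finrank ℂ (LinearMap.range (Matrix.mulVecLin Q)) = 1 := by omega
  obtain ⟨u0, hu0ne, hu0span⟩ := finrank_eq_one_iff'.1 hR1
  set u : Fin 3 → ℂ := (u0 : Fin 3 → ℂ) with hu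
  have hune : u ≠ 0 := fun h => hu0ne (Subtype.ext h)
  have hspan : ∀ y, ∃ s : ℂ, Q.mulVec y = s • u := by
    intro y
    obtain ⟨s, hs⟩ := hu0span ⟨Q.mulVec y, ⟨y, rfl⟩⟩
    exact ⟨s, by
      simpa [hu] using
        (congrArg (fun z : LinearMap.range (Matrix.mulVecLin Q) => (z : Fin 3 → ℂ)) hs).symm⟩
  obtain ⟨μ, hμ⟩ := hspan u
  have hexp : Q * Q = P * P - (2 * c) • P + (c * c) • (1 : Matrix (Fin 3) (Fin 3) ℂ) := by
    rw [hQ]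
    simp only [Matrix.sub_mul, Matrix.mul_sub, Matrix.smul_mul, Matrix.mul_smul,
      Matrix.one_mul, Matrix.mul_one, smul_smul]
    module
  have htrQQ : Matrix.trace (Q * Q) = 3 * (c * c) := by
    rw [hexp, Matrix.trace_add, Matrix.trace_sub, Matrix.trace_smul, Matrix.trace_smul,
      htr, htrP2, Matrix.trace_one]
    simp
    ring
  have htrQ : Matrix.trace Q = -(3 * c) := by
    rw [hQ, Matrix.trace_sub, Matrix.trace_smul, htr, Matrix.trace_one]
    simp
    ring
  have hPP : P * P = 0 := by
    by_cases hμ0 : μ = 0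
    · have hQQ : Q * Q = 0 := by
        apply matrix_eq_zero_of_mulVec
        intro x
        rw [← Matrix.mulVec_mulVec]
        obtain ⟨s, hs⟩ := hspan x
        rw [hs, Matrix.mulVec_smul, hμ, hμ0, zero_smul, smul_zero]
      have hc0 : c = 0 := by
        have := htrQQ
        rw [hQQ, Matrix.trace_zero] at this
        have h3 : (3 : ℂ) ≠ 0 := by norm_num
        field_simp at this
        simpa using this.symm
      have hQP : Q = P := by rw [hQ, hc0, zero_smul, sub_zero]
      rw [← hQP, hQQ]
    · exfalso
      let bE : Basis (Fin 2) ℂ E := finBasisOfFinrankEq ℂ E hE2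
      set k : Fin 2 → (Fin 3 → ℂ) := fun i => ((bE i : E) : Fin 3 → ℂ) with hk
      have hkE' : ∀ i, Q.mulVec (k i) = 0 := by
        intro i
        exact (bE i).2
      have hkind : LinearIndependent ℂ k :=
        bE.linearIndependent.map' E.subtype (Submodule.ker_subtype E)
      have htrip : LinearIndependent ℂ ![u, k 0, k 1] := by
        rw [Fintype.linearIndependent_iff]
        intro g hg
        rw [Fin.sum_univ_three] at hg
        simp only [Matrix.cons_val_zero, Matrix.cons_val_one, Matrix.head_cons,
          Matrix.cons_val_two, Matrix.tail_cons] at hg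
        have hg0 : g 0 = 0 := by
          have := congrArg (fun x => Q.mulVec x) hg
          simp only [Matrix.mulVec_add, Matrix.mulVec_smul, hμ, hkE', smul_zero,
            add_zero, Matrix.mulVec_zero, smul_smul] at this
          rcases smul_eq_zero.1 this with h | h
          · rcases mul_eq_zero.1 h with h' | h'
            · exact h'
            · exact absurd h' hμ0
          · exact absurd h hune
        rw [hg0, zero_smul, zero_add] at hg
        have hpair := Fintype.linearIndependent_iff.1 hkind ![g 1, g 2] (by
          rw [Fin.sum_univ_two]
          simpa using hg)
        intro i
        fin_cases i
        · exact hg0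
        · simpa using hpair 0
        · simpa using hpair 1
      let b2 : Basis (Fin 3) ℂ (Fin 3 → ℂ) :=
        basisOfLinearIndependentOfCardEqFinrank htrip card_eq
      have hb2 : ⇑b2 = ![u, k 0, k 1] := coe_basisOfLinearIndependentOfCardEqFinrank _ _
      set B : Matrix (Fin 3) (Fin 3) ℂ := (Pi.basisFun ℂ (Fin 3)).toMatrix ⇑b2 with hBdef
      have hB : ∀ i j, B i j = ![u, k 0, k 1] j i := by
        intro i j
        rw [hBdef, Basis.toMatrix_apply, Pi.basisFun_repr, hb2]
      haveI hBinv : Invertible B := (Pi.basisFun ℂ (Fin 3)).invertibleToMatrix b2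
      set E00 : Matrix (Fin 3) (Fin 3) ℂ := Matrix.single (0 : Fin 3) (0 : Fin 3) (1 : ℂ)
        with hE00
      have hQB : Q * B = B * (μ • E00) := by
        ext i j
        have hQu' := congrFun hμ i
        have hk0 := congrFun (hkE' 0) i
        have hk1 := congrFun (hkE' 1) i
        rw [Matrix.mulVec, dotProduct, Fin.sum_univ_three] at hQu' hk0 hk1
        simp only [Pi.smul_apply, smul_eq_mul, Pi.zero_apply] at hQu' hk0 hk1
        fin_cases j <;>
          rw [Matrix.mul_apply, Fin.sum_univ_three, Matrix.mul_apply, Fin.sum_univ_three] <;>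
          simp only [hB, hE00, Matrix.cons_val_zero, Matrix.cons_val_one, Matrix.head_cons,
            Matrix.cons_val_two, Matrix.tail_cons, Matrix.single, Matrix.smul_apply,
            Matrix.of_apply, smul_eq_mul] <;>
          norm_num [Fin.ext_iff]
        · rw [hQu']; ring
        · exact hk0
        · exact hk1
      have hQform : Q = B * (μ • E00) * ⅟B := by
        rw [← hQB, Matrix.mul_assoc, mul_invOf_self, Matrix.mul_one]
      have htrE00 : Matrix.trace E00 = 1 := by
        rw [hE00]
        simp [Matrix.trace, Fin.sum_univ_three, Matrix.single]
      have htrQμ : Matrix.trace Q = μ := by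
        rw [hQform, Matrix.trace_mul_comm, ← Matrix.mul_assoc, invOf_mul_self,
          Matrix.one_mul, Matrix.trace_smul, htrE00]
        simp
      have hQQform : Q * Q = B * ((μ * μ) • E00) * ⅟B := by
        rw [hQform]
        have hassoc : B * (μ • E00) * ⅟B * (B * (μ • E00) * ⅟B)
            = B * ((μ • E00) * (⅟B * B) * (μ • E00)) * ⅟B := by
          simp only [Matrix.mul_assoc]
        rw [hassoc, invOf_mul_self, Matrix.mul_one]
        congr 1
        congr 1
        rw [Matrix.smul_mul, Matrix.mul_smul, smul_smul, hE00]
        rw [Matrix.single_mul_single_same]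
        norm_num
      have htrQQμ : Matrix.trace (Q * Q) = μ * μ := by
        rw [hQQform, Matrix.trace_mul_comm, ← Matrix.mul_assoc, invOf_mul_self,
          Matrix.one_mul, Matrix.trace_smul, htrE00]
        simp
      rw [htrQμ] at htrQ
      rw [htrQQμ] at htrQQ
      rw [htrQ] at htrQQ
      have hc0 : c = 0 := by
        have h6 : (6 : ℂ) * (c * c) = 0 := by
          ring_nf
          ring_nf at htrQQ
          linear_combination htrQQ
        rcases mul_eq_zero.1 h6 with h | h
        · norm_num at h
        · rcases mul_eq_zero.1 h with h' | h' <;> exact h'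
      rw [hc0] at htrQ
      simp at htrQ
      exact hμ0 htrQ
  -- ### Final construction of the conjugating matrix
  have hv0 : ∃ v0, P.mulVec v0 ≠ 0 := by
    by_contra h
    push_neg at h
    exact hP0 (matrix_eq_zero_of_mulVec h)
  obtain ⟨v0, hv0⟩ := hv0
  set u2 : Fin 3 → ℂ := P.mulVec v0 with hu2
  have hPu2 : P.mulVec u2 = 0 := by rw [hu2, Matrix.mulVec_mulVec, hPP, Matrix.zero_mulVec]
  have hrange_le : LinearMap.range (Matrix.mulVecLin P) ≤ LinearMap.ker (Matrix.mulVecLin P) := by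
    rintro _ ⟨x, rfl⟩
    simp only [LinearMap.mem_ker, Matrix.mulVecLin_apply, Matrix.mulVec_mulVec, hPP,
      Matrix.zero_mulVec]
  have hker2 : 2 ≤ finrank ℂ (LinearMap.ker (Matrix.mulVecLin P)) := by
    have hrn := LinearMap.finrank_range_add_finrank_ker (Matrix.mulVecLin P)
    rw [Module.finrank_fin_fun] at hrn
    have := Submodule.finrank_mono hrange_le
    omega
  have hspanu : finrank ℂ (ℂ ∙ u2) = 1 := finrank_span_singleton hv0
  have hnotle : ¬ (LinearMap.ker (Matrix.mulVecLin P) ≤ ℂ ∙ u2) := fun hle => by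
    have := Submodule.finrank_mono hle
    omega
  obtain ⟨w2, hw2ker, hw2not⟩ := SetLike.not_le_iff_exists.1 hnotle
  have hPw2 : P.mulVec w2 = 0 := hw2ker
  have hu2ne : u2 ≠ 0 := hv0
  have htrip2 : LinearIndependent ℂ ![u2, v0, w2] := by
    rw [Fintype.linearIndependent_iff]
    intro g hg
    rw [Fin.sum_univ_three] at hg
    simp only [Matrix.cons_val_zero, Matrix.cons_val_one, Matrix.head_cons,
      Matrix.cons_val_two, Matrix.tail_cons] at hg
    have hg1 : g 1 = 0 := by
      have := congrArg (fun x => P.mulVec x) hg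
      simp only [Matrix.mulVec_add, Matrix.mulVec_smul, hPu2, hPw2, ← hu2, smul_zero,
        zero_add, add_zero, Matrix.mulVec_zero] at this
      rcases smul_eq_zero.1 this with h | h
      · exact h
      · exact absurd h hu2ne
    rw [hg1, zero_smul, add_zero] at hg
    have hg2 : g 2 = 0 := by
      by_contra hg2
      apply hw2not
      have hww : w2 = (g 2)⁻¹ • (g 2 • w2) := by
        rw [smul_smul, inv_mul_cancel₀ hg2, one_smul]
      rw [hww, eq_neg_of_add_eq_zero_right hg]
      exact Submodule.smul_mem _ _ (Submodule.neg_mem _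
        (Submodule.smul_mem _ _ (Submodule.mem_span_singleton_self u2)))
    rw [hg2, zero_smul, add_zero] at hg
    have hg0 : g 0 = 0 := by
      rcases smul_eq_zero.1 hg with h | h
      · exact h
      · exact absurd h hu2ne
    intro i
    fin_cases i
    · exact hg0
    · exact hg1
    · exact hg2
  let b4 : Basis (Fin 3) ℂ (Fin 3 → ℂ) := basisOfLinearIndependentOfCardEqFinrank htrip2 card_eq
  have hb4 : ⇑b4 = ![u2, v0, w2] := coe_basisOfLinearIndependentOfCardEqFinrank _ _
  set B2 : Matrix (Fin 3) (Fin 3) ℂ := (Pi.basisFun ℂ (Fin 3)).toMatrix ⇑b4 with hB2def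
  have hB2 : ∀ i j, B2 i j = ![u2, v0, w2] j i := by
    intro i j
    rw [hB2def, Basis.toMatrix_apply, Pi.basisFun_repr, hb4]
  haveI hB2inv : Invertible B2 := (Pi.basisFun ℂ (Fin 3)).invertibleToMatrix b4
  have hdU : IsUnit B2.det := (Matrix.isUnit_iff_isUnit_det B2).1 (isUnit_of_invertible B2)
  set d : ℂ := B2.det with hd
  have hdne : d ≠ 0 := hdU.ne_zero
  set D : Matrix (Fin 3) (Fin 3) ℂ := Matrix.diagonal ![1, 1, d⁻¹] with hD
  set B' : Matrix (Fin 3) (Fin 3) ℂ := B2 * D with hB'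
  have hdet' : B'.det = 1 := by
    rw [hB', Matrix.det_mul, hD, Matrix.det_diagonal, Fin.prod_univ_three]
    simp only [Matrix.cons_val_zero, Matrix.cons_val_one, Matrix.head_cons,
      Matrix.cons_val_two, Matrix.tail_cons]
    field_simp
    exact hd.symm
  have hPB : P * B2 = B2 * Matrix.single 0 1 1 := by
    ext i j
    have hPu' := congrFun hPu2 i
    have hPw' := congrFun hPw2 i
    rw [Matrix.mulVec, dotProduct, Fin.sum_univ_three, Pi.zero_apply] at hPu' hPw'
    have hui := congrFun hu2 i
    rw [Matrix.mulVec, dotProduct, Fin.sum_univ_three] at hui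
    fin_cases j <;>
      rw [Matrix.mul_apply, Fin.sum_univ_three, Matrix.mul_apply, Fin.sum_univ_three] <;>
      simp only [hB2, Matrix.cons_val_zero, Matrix.cons_val_one, Matrix.head_cons,
        Matrix.cons_val_two, Matrix.tail_cons, Matrix.single, Matrix.of_apply] <;>
      norm_num [Fin.ext_iff]
    · exact hPu'
    · exact hui.symm
    · exact hPw'
  have hED : Matrix.single (0 : Fin 3) (1 : Fin 3) (1:ℂ) * D
      = Matrix.single (0 : Fin 3) (1 : Fin 3) (1:ℂ) := by
    ext i j
    rw [hD, Matrix.mul_diagonal]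
    fin_cases j <;> simp [Matrix.single]
  have hDE : D * Matrix.single (0 : Fin 3) (1 : Fin 3) (1:ℂ)
      = Matrix.single (0 : Fin 3) (1 : Fin 3) (1:ℂ) := by
    ext i j
    rw [hD, Matrix.diagonal_mul]
    fin_cases i <;> simp [Matrix.single]
  have hPB' : P * B' = B' * Matrix.single 0 1 1 :=
    calc P * B' = P * B2 * D := by rw [hB', Matrix.mul_assoc]
      _ = B2 * (Matrix.single 0 1 1 * D) := by rw [hPB, Matrix.mul_assoc]
      _ = B2 * (D * Matrix.single 0 1 1) := by
          rw [hED]; exact congrArg (fun z => B2 * z) hDE.symm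
      _ = B' * Matrix.single 0 1 1 := by rw [hB', Matrix.mul_assoc]
  let g0 : Matrix.SpecialLinearGroup (Fin 3) ℂ := ⟨B', hdet'⟩
  refine ⟨g0⁻¹, ?_⟩
  rw [inv_inv]
  have hcoe : (g0 : Matrix (Fin 3) (Fin 3) ℂ) = B' := rfl
  rw [Matrix.SpecialLinearGroup.coe_inv, hcoe, Matrix.mul_assoc, hPB',
    ← Matrix.mul_assoc, Matrix.adjugate_mul, hdet', one_smul, Matrix.one_mul]
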